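/- If f and g both minimize the penalized sum of squares PENSS_{λ,m} over a convex set of C^m functions with λ > 0, then f(t_i) = g(t_i) for all data points t_i and D^m f = D^m g almost everywhere (i.e., ∫ (D^m f - D^m g)^2 = 0). -/

import Mathlib

lemma stmt_4_aux (m : ℕ) (f g : ℝ → ℝ) (hf : ContDiff ℝ (m : ℕ∞) f)
    (hg : ContDiff ℝ (m : ℕ∞) g) (x : ℝ) :
    iteratedDeriv m ((2⁻¹ : ℝ) • f + (2⁻¹ : ℝ) • g) x =
      2⁻¹ * iteratedDeriv m f x + 2⁻¹ * iteratedDeriv m g x := by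
  have hf' : ContDiff ℝ (m : ℕ) f := hf.of_le (by exact_mod_cast le_refl _)
  have hg' : ContDiff ℝ (m : ℕ) g := hg.of_le (by exact_mod_cast le_refl _)
  have hsf : ContDiff ℝ (m : ℕ) ((2⁻¹ : ℝ) • f) := hf'.const_smul (2⁻¹ : ℝ)
  have hsg : ContDiff ℝ (m : ℕ) ((2⁻¹ : ℝ) • g) := hg'.const_smul (2⁻¹ : ℝ)
  simp only [iteratedDeriv_eq_iteratedFDeriv]
  rw [iteratedFDeriv_add_apply hsf.contDiffAt hsg.contDiffAt,
    iteratedFDeriv_const_smul_apply hf'.contDiffAt, iteratedFDeriv_const_smul_apply hg'.contDiffAt]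
  simp [smul_eq_mul]

/-- If `f` and `g` both minimize the penalized sum of squares over a convex set of `C^m`
functions with `λ > 0`, then they agree at all data points and their `m`-th derivatives agree
almost everywhere (the integral of the squared difference vanishes). -/
theorem stmt_4 (n m : ℕ) (t y : Fin n → ℝ) (lam : ℝ) (hlam : 0 < lam)
    (PENSS : (ℝ → ℝ) → ℝ)
    (hPENSS : ∀ f : ℝ → ℝ, PENSS f =
      (∑ i, (y i - f (t i)) ^ 2) + lam * ∫ s in (0:ℝ)..1, (iteratedDeriv m f s) ^ 2)
    (S : Set (ℝ → ℝ)) (hSconv : Convex ℝ S)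
    (hSC : ∀ h ∈ S, ContDiff ℝ (m : ℕ∞) h)
    (f g : ℝ → ℝ) (hfS : f ∈ S) (hgS : g ∈ S)
    (hfmin : ∀ h ∈ S, PENSS f ≤ PENSS h)
    (hgmin : ∀ h ∈ S, PENSS g ≤ PENSS h) :
    (∀ i, f (t i) = g (t i)) ∧
      (∫ s in (0:ℝ)..1, (iteratedDeriv m f s - iteratedDeriv m g s) ^ 2) = 0 := by
  set h : ℝ → ℝ := (2⁻¹ : ℝ) • f + (2⁻¹ : ℝ) • g with hh
  have hhS : h ∈ S := hSconv hfS hgS (by norm_num) (by norm_num) (by norm_num)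
  set u := iteratedDeriv m f with hu
  set v := iteratedDeriv m g with hv
  have hcf := hSC f hfS
  have hcg := hSC g hgS
  have hcu : Continuous u := hcf.continuous_iteratedDeriv m (by exact_mod_cast le_refl _)
  have hcv : Continuous v := hcg.continuous_iteratedDeriv m (by exact_mod_cast le_refl _)
  have hw : ∀ x, iteratedDeriv m h x = 2⁻¹ * u x + 2⁻¹ * v x :=
    stmt_4_aux m f g hcf hcg
  -- integrability
  have hiu : IntervalIntegrable (fun s => u s ^ 2) MeasureTheory.volume 0 1 :=
    (hcu.pow 2).intervalIntegrable 0 1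
  have hiv : IntervalIntegrable (fun s => v s ^ 2) MeasureTheory.volume 0 1 :=
    (hcv.pow 2).intervalIntegrable 0 1
  have hiuv : IntervalIntegrable (fun s => (u s - v s) ^ 2) MeasureTheory.volume 0 1 :=
    (((hcu.sub hcv)).pow 2).intervalIntegrable 0 1
  set Q : ℝ := ∑ i, (f (t i) - g (t i)) ^ 2 with hQ
  set D : ℝ := ∫ s in (0:ℝ)..1, (u s - v s) ^ 2 with hD
  have hQnn : 0 ≤ Q := Finset.sum_nonneg fun i _ => sq_nonneg _
  have hDnn : 0 ≤ D := by
    apply intervalIntegral.integral_nonneg (by norm_num)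
    intro x _; exact sq_nonneg _
  -- integral identity
  have hInt : (∫ s in (0:ℝ)..1, (iteratedDeriv m h s) ^ 2) =
      2⁻¹ * (∫ s in (0:ℝ)..1, u s ^ 2) + 2⁻¹ * (∫ s in (0:ℝ)..1, v s ^ 2) - 4⁻¹ * D := by
    have : (∫ s in (0:ℝ)..1, (iteratedDeriv m h s) ^ 2) =
        ∫ s in (0:ℝ)..1, (2⁻¹ * u s ^ 2 + 2⁻¹ * v s ^ 2 - 4⁻¹ * (u s - v s) ^ 2) := by
      apply intervalIntegral.integral_congr
      intro x _
      show iteratedDeriv m h x ^ 2 = _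
      rw [hw x]; ring
    rw [this, intervalIntegral.integral_sub ((hiu.const_mul _).add (hiv.const_mul _))
        (hiuv.const_mul _),
      intervalIntegral.integral_add (hiu.const_mul _) (hiv.const_mul _),
      intervalIntegral.integral_const_mul, intervalIntegral.integral_const_mul,
      intervalIntegral.integral_const_mul]
  -- sum identity
  have hSum : (∑ i, (y i - h (t i)) ^ 2) =
      2⁻¹ * (∑ i, (y i - f (t i)) ^ 2) + 2⁻¹ * (∑ i, (y i - g (t i)) ^ 2) - 4⁻¹ * Q := by
    rw [hQ, Finset.mul_sum, Finset.mul_sum, Finset.mul_sum, ← Finset.sum_add_distrib,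
      ← Finset.sum_sub_distrib]
    apply Finset.sum_congr rfl
    intro i _
    have : h (t i) = 2⁻¹ * f (t i) + 2⁻¹ * g (t i) := by simp [hh, smul_eq_mul]
    rw [this]; ring
  have hP : PENSS f + PENSS g ≤ 2 * PENSS h :=
    by linarith [hfmin h hhS, hgmin h hhS]
  have key : PENSS h = 2⁻¹ * PENSS f + 2⁻¹ * PENSS g - (4⁻¹ * Q + lam * (4⁻¹ * D)) := by
    rw [hPENSS f, hPENSS g, hPENSS h, hInt, hSum]; ring
  have hzero : 4⁻¹ * Q + lam * (4⁻¹ * D) ≤ 0 := by linarith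
  have hQ0 : Q = 0 := by nlinarith
  have hD0 : D = 0 := by nlinarith
  constructor
  · intro i
    have := (Finset.sum_eq_zero_iff_of_nonneg (fun i _ => sq_nonneg (f (t i) - g (t i)))).1
      hQ0 i (Finset.mem_univ i)
    have := pow_eq_zero_iff (n := 2) (by norm_num) |>.1 this
    linarith
  · exact hD0
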